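/- Optimal coupled MLMF variance (Theorem 3, coupled case): with the optimal coefficients a_l* = ρ_{l,L} σ_L / σ_l, the MLMF estimator Y* = P_L^{(N_L)} + Σ_{l=1}^{L−1} a_l* (P_l^{(N_l)} − P_l^{(N_{l+1})}) satisfies Var(Y*) = σ_L² Σ_{l=1}^{L} (ρ_{l,L}² − ρ_{l−1,L}²)/N_l. -/

import Mathlib

open MeasureTheory ProbabilityTheory Finset

/-- Sample mean of the first `n` samples of the sequence `X`. -/
noncomputable def sampleMean {Ω : Type} (n : ℕ) (X : ℕ → Ω → ℝ) : Ω → ℝ :=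
  fun ω => (n : ℝ)⁻¹ * ∑ j ∈ Finset.range n, X j ω

/-- Covariance of two real random variables. -/
noncomputable def covar {Ω : Type} [MeasurableSpace Ω] (μ : Measure Ω) (X Y : Ω → ℝ) : ℝ :=
  ∫ ω, (X ω - μ[X]) * (Y ω - μ[Y]) ∂μ

/- ### Auxiliary lemmas -/

lemma integrable_mul_of_memL2 {Ω : Type} [MeasurableSpace Ω] {μ : Measure Ω} {f g : Ω → ℝ}
    (hf : MemLp f 2 μ) (hg : MemLp g 2 μ) : Integrable (fun ω => f ω * g ω) μ := by
  have h12 : (1 : ENNReal) / 1 = 1 / 2 + 1 / 2 := by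
    rw [div_one, one_div, ENNReal.inv_two_add_inv_two]
  exact memLp_one_iff_integrable.mp (hg.smul (φ := f) hf)

lemma covar_comm' {Ω : Type} [MeasurableSpace Ω] (μ : Measure Ω) (X Y : Ω → ℝ) :
    covar μ X Y = covar μ Y X := by
  unfold covar
  exact integral_congr_ae (Filter.Eventually.of_forall fun ω => mul_comm _ _)

lemma covar_self' {Ω : Type} [MeasurableSpace Ω] {μ : Measure Ω} [IsFiniteMeasure μ] {X : Ω → ℝ}
    (hX : MemLp X 2 μ) : covar μ X X = variance X μ := by
  rw [variance_eq_integral hX.aemeasurable]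
  exact integral_congr_ae (Filter.Eventually.of_forall fun ω => by simp [covar, sq])

lemma variance_linear_comb {Ω : Type} [MeasurableSpace Ω] (μ : Measure Ω)
    [IsProbabilityMeasure μ] (s : Finset ℕ) (c : ℕ → ℝ) (X : ℕ → Ω → ℝ)
    (hX : ∀ l ∈ s, MemLp (X l) 2 μ) :
    variance (fun ω => ∑ l ∈ s, c l * X l ω) μ
      = ∑ l ∈ s, ∑ l' ∈ s, c l * c l' * covar μ (X l) (X l') := by
  have hXi : ∀ l ∈ s, Integrable (X l) μ := fun l hl => (hX l hl).integrable one_le_two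
  have hS2 : MemLp (fun ω => ∑ l ∈ s, c l * X l ω) 2 μ :=
    memLp_finset_sum s (fun l hl => (hX l hl).const_mul (c l))
  have hmean : (μ[fun ω => ∑ l ∈ s, c l * X l ω]) = ∑ l ∈ s, c l * (μ[X l]) := by
    rw [integral_finset_sum _ (fun l hl => ((hXi l hl).const_mul (c l)))]
    exact Finset.sum_congr rfl fun l hl => integral_const_mul _ _
  have hprod : ∀ l ∈ s, ∀ l' ∈ s,
      Integrable (fun ω => (X l ω - μ[X l]) * (X l' ω - μ[X l'])) μ := by
    intro l hl l' hl'
    exact integrable_mul_of_memL2 ((hX l hl).sub (memLp_const _))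
      ((hX l' hl').sub (memLp_const _))
  rw [variance_eq_integral hS2.aemeasurable]
  change ∫ ω, (((fun ω => ∑ l ∈ s, c l * X l ω)
        - fun _ => μ[fun ω => ∑ l ∈ s, c l * X l ω] : Ω → ℝ) ^ 2) ω ∂μ = _
  have hfun : (((fun ω => ∑ l ∈ s, c l * X l ω)
        - fun _ => μ[fun ω => ∑ l ∈ s, c l * X l ω] : Ω → ℝ) ^ 2)
      = fun ω => ∑ l ∈ s, ∑ l' ∈ s, (c l * c l')
          * ((X l ω - μ[X l]) * (X l' ω - μ[X l'])) := by
    funext ω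
    simp only [Pi.pow_apply, Pi.sub_apply, hmean]
    rw [← Finset.sum_sub_distrib]
    have h2 : ∀ l ∈ s, c l * X l ω - c l * μ[X l] = c l * (X l ω - μ[X l]) :=
      fun l _ => (mul_sub _ _ _).symm
    rw [Finset.sum_congr rfl h2, sq, Finset.sum_mul_sum]
    exact Finset.sum_congr rfl fun l _ => Finset.sum_congr rfl fun l' _ => by ring
  rw [hfun]
  rw [integral_finset_sum _ (fun l hl => integrable_finset_sum _
    (fun l' hl' => ((hprod l hl l' hl').const_mul _)))]
  refine Finset.sum_congr rfl fun l hl => ?_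
  rw [integral_finset_sum _ (fun l' hl' => ((hprod l hl l' hl').const_mul _))]
  exact Finset.sum_congr rfl fun l' hl' => integral_const_mul _ _

/-- The weight of sample `j` in a sample mean over `n` samples. -/
noncomputable def dcoef (n j : ℕ) : ℝ := if j < n then (n : ℝ)⁻¹ else 0

lemma dcoef_zero (j : ℕ) : dcoef 0 j = 0 := by simp [dcoef]

lemma sum_dcoef_mul {M n m : ℕ} (hn : 1 ≤ n) (hnm : n ≤ m) (hm : m ≤ M) :
    ∑ j ∈ Finset.range M, dcoef n j * dcoef m j = (m : ℝ)⁻¹ := by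
  have hsub : Finset.range n ⊆ Finset.range M :=
    Finset.range_subset_range.2 (le_trans hnm hm)
  rw [← Finset.sum_subset hsub (fun j _ hj => by
    simp only [Finset.mem_range, not_lt] at hj
    simp [dcoef, not_lt.2 hj])]
  have hval : ∀ j ∈ Finset.range n, dcoef n j * dcoef m j = (n : ℝ)⁻¹ * (m : ℝ)⁻¹ := by
    intro j hj
    simp only [Finset.mem_range] at hj
    simp [dcoef, hj, lt_of_lt_of_le hj hnm]
  rw [Finset.sum_congr rfl hval, Finset.sum_const, Finset.card_range, nsmul_eq_mul,
    ← mul_assoc]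
  have hne : (n : ℝ) ≠ 0 := by exact_mod_cast Nat.one_le_iff_ne_zero.mp hn
  rw [mul_inv_cancel₀ hne, one_mul]

lemma sum_dcoef_mul' {M n m : ℕ} (hm : 1 ≤ m) (hmn : m ≤ n) (hn : n ≤ M) :
    ∑ j ∈ Finset.range M, dcoef n j * dcoef m j = (n : ℝ)⁻¹ := by
  rw [Finset.sum_congr rfl (fun j _ => mul_comm (dcoef n j) (dcoef m j))]
  exact sum_dcoef_mul hm hmn hn

lemma sum_dcoef_zero_right (M n : ℕ) :
    ∑ j ∈ Finset.range M, dcoef n j * dcoef 0 j = 0 := by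
  simp [dcoef_zero]

lemma sampleMean_eq_sum {Ω : Type} {M n : ℕ} (hnM : n ≤ M) (X : ℕ → Ω → ℝ) (ω : Ω) :
    sampleMean n X ω = ∑ j ∈ Finset.range M, dcoef n j * X j ω := by
  unfold sampleMean
  rw [Finset.mul_sum]
  rw [← Finset.sum_subset (Finset.range_subset_range.2 hnM) (fun j _ hj => by
    simp only [Finset.mem_range, not_lt] at hj
    simp [dcoef, not_lt.2 hj])]
  exact Finset.sum_congr rfl fun j hj => by
    simp only [Finset.mem_range] at hj
    simp [dcoef, hj]

lemma abel_sum (m : ℕ) (g h : ℕ → ℝ) (h0 : h 0 = 0) :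
    ∑ l ∈ Finset.Icc 1 (m + 1), (h l - h (l - 1)) * g l
      = h (m + 1) * g (m + 1) + ∑ l ∈ Finset.Icc 1 m, h l * (g l - g (l + 1)) := by
  induction m with
  | zero => simp [h0]
  | succ m ih =>
    rw [Finset.sum_Icc_succ_top (by omega), ih, Finset.sum_Icc_succ_top (by omega)]
    simp only [Nat.add_sub_cancel]
    ring

/-- Coefficient of `Z j [l]` in the coupled MLMF estimator. -/
noncomputable def ccoef (ρ σ : ℕ → ℝ) (N : ℕ → ℕ) (L j l : ℕ) : ℝ :=
  (ρ l * σ L / σ l) * (dcoef (if l ≤ L then N l else 0) j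
    - dcoef (if l + 1 ≤ L then N (l + 1) else 0) j)

/-- Per-sample contribution to the coupled MLMF estimator. -/
noncomputable def wfun {Ω : Type} (Z : ℕ → Ω → ℕ → ℝ) (ρ σ : ℕ → ℝ) (N : ℕ → ℕ)
    (L j : ℕ) : Ω → ℝ :=
  fun ω => ∑ l ∈ Finset.Icc 1 L, ccoef ρ σ N L j l * Z j ω l

/-- Sum over samples of products of coefficients. -/
noncomputable def gsum (ρ σ : ℕ → ℝ) (N : ℕ → ℕ) (L M l l' : ℕ) : ℝ :=
  ∑ j ∈ Finset.range M, ccoef ρ σ N L j l * ccoef ρ σ N L j l'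

lemma gsum_eval (ρ σ : ℕ → ℝ) (N : ℕ → ℕ) (L M l l' : ℕ) :
    gsum ρ σ N L M l l' = (ρ l * σ L / σ l) * (ρ l' * σ L / σ l') *
      ∑ j ∈ Finset.range M,
        (dcoef (if l ≤ L then N l else 0) j - dcoef (if l + 1 ≤ L then N (l + 1) else 0) j)
        * (dcoef (if l' ≤ L then N l' else 0) j
            - dcoef (if l' + 1 ≤ L then N (l' + 1) else 0) j) := by
  unfold gsum ccoef
  rw [Finset.mul_sum]
  exact Finset.sum_congr rfl fun j _ => by ring

lemma sum_dsub (M n1 n2 m1 m2 : ℕ) :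
    ∑ j ∈ Finset.range M, (dcoef n1 j - dcoef n2 j) * (dcoef m1 j - dcoef m2 j)
      = ((∑ j ∈ Finset.range M, dcoef n1 j * dcoef m1 j)
          - (∑ j ∈ Finset.range M, dcoef n1 j * dcoef m2 j))
        - ((∑ j ∈ Finset.range M, dcoef n2 j * dcoef m1 j)
          - (∑ j ∈ Finset.range M, dcoef n2 j * dcoef m2 j)) := by
  rw [← Finset.sum_sub_distrib, ← Finset.sum_sub_distrib, ← Finset.sum_sub_distrib]
  exact Finset.sum_congr rfl fun j _ => by ring

/-- Theorem 3, coupled case: with the optimal coefficients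
`a_l* = ρ_{l,L} σ_L / σ_l`, the coupled MLMF estimator
`Y* = P_L^{(N_L)} + Σ_{l=1}^{L−1} a_l* (P_l^{(N_l)} − P_l^{(N_{l+1})})`
satisfies `Var(Y*) = σ_L² Σ_{l=1}^{L} (ρ_{l,L}² − ρ_{l−1,L}²)/N_l`,
with the conventions `ρ_{0,L} = 0` and `ρ_{L,L} = 1`. -/
theorem stmt_8
    {Ω : Type} [MeasurableSpace Ω] (μ : Measure Ω) [IsProbabilityMeasure μ]
    (L : ℕ) (hL : 1 ≤ L)
    (Z : ℕ → Ω → ℕ → ℝ)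
    (hmeas : ∀ j, Measurable (Z j))
    (hindep : iIndepFun Z μ)
    (hident : ∀ j, IdentDistrib (Z j) (Z 0) μ μ)
    (hL2 : ∀ j, ∀ l ∈ Finset.Icc 1 L, MemLp (fun ω => Z j ω l) 2 μ)
    (σ ρ : ℕ → ℝ)
    (hσ : ∀ l ∈ Finset.Icc 1 L, σ l = Real.sqrt (variance (fun ω => Z 0 ω l) μ))
    (hσpos : ∀ l ∈ Finset.Icc 1 L, 0 < σ l)
    (hρ : ∀ l ∈ Finset.Icc 1 L,
      ρ l = covar μ (fun ω => Z 0 ω l) (fun ω => Z 0 ω L) / (σ l * σ L))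
    (hρ0 : ρ 0 = 0) (hρL : ρ L = 1)
    (N : ℕ → ℕ)
    (hNnest : ∀ l ∈ Finset.Icc 1 (L - 1), N (l + 1) ≤ N l)
    (hNLpos : 1 ≤ N L) :
    variance (fun ω => sampleMean (N L) (fun j ω' => Z j ω' L) ω
        + ∑ l ∈ Finset.Icc 1 (L - 1),
            (ρ l * σ L / σ l) * (sampleMean (N l) (fun j ω' => Z j ω' l) ω
              - sampleMean (N (l + 1)) (fun j ω' => Z j ω' l) ω)) μ
      = (σ L) ^ 2 * ∑ l ∈ Finset.Icc 1 L, ((ρ l) ^ 2 - (ρ (l - 1)) ^ 2) / N l := by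
  classical
  have hLL : L ∈ Finset.Icc 1 L := by simp [Finset.mem_Icc, hL]
  have hσLne : σ L ≠ 0 := ne_of_gt (hσpos L hLL)
  have hσne : ∀ l, 1 ≤ l → l ≤ L → σ l ≠ 0 :=
    fun l h1 h2 => ne_of_gt (hσpos l (by simp [Finset.mem_Icc, h1, h2]))
  -- monotonicity of the sample counts
  have hmono : ∀ k l : ℕ, 1 ≤ k → k ≤ l → l ≤ L → N l ≤ N k := by
    have base : ∀ d k : ℕ, 1 ≤ k → k + d ≤ L → N (k + d) ≤ N k := by
      intro d
      induction d with
      | zero => intro k _ _; simp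
      | succ d ih =>
        intro k hk hkd
        have h1 : N (k + d + 1) ≤ N (k + d) := by
          apply hNnest
          simp only [Finset.mem_Icc]
          omega
        exact le_trans h1 (ih k hk (by omega))
    intro k l hk hkl hlL
    have h : l = k + (l - k) := by omega
    rw [h]
    exact base (l - k) k hk (by omega)
  have hN1 : ∀ l : ℕ, 1 ≤ l → l ≤ L → 1 ≤ N l :=
    fun l h1 h2 => le_trans hNLpos (hmono l L h1 h2 le_rfl)
  have hNM : ∀ l : ℕ, 1 ≤ l → l ≤ L → N l ≤ N 1 :=
    fun l h1 h2 => hmono 1 l le_rfl h1 h2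
  -- covariance facts
  have hσsq : ∀ l, 1 ≤ l → l ≤ L → σ l ^ 2 = variance (fun ω => Z 0 ω l) μ := by
    intro l h1 h2
    rw [hσ l (by simp [Finset.mem_Icc, h1, h2])]
    exact Real.sq_sqrt (variance_nonneg _ _)
  have hcovself : ∀ l, 1 ≤ l → l ≤ L →
      covar μ (fun ω => Z 0 ω l) (fun ω => Z 0 ω l) = σ l ^ 2 := by
    intro l h1 h2
    rw [covar_self' (hL2 0 l (by simp [Finset.mem_Icc, h1, h2])), hσsq l h1 h2]
  have hcovL : ∀ l, 1 ≤ l → l ≤ L →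
      covar μ (fun ω => Z 0 ω l) (fun ω => Z 0 ω L) = ρ l * (σ l * σ L) := by
    intro l h1 h2
    have h := hρ l (by simp [Finset.mem_Icc, h1, h2])
    have hne : σ l * σ L ≠ 0 := mul_ne_zero (hσne l h1 h2) hσLne
    rw [h, div_mul_cancel₀ _ hne]
  -- splitting of `Icc 1 L`
  have hins : Finset.Icc 1 L = insert L (Finset.Icc 1 (L - 1)) := by
    ext x
    simp only [Finset.mem_Icc, Finset.mem_insert]
    omega
  have hnot : L ∉ Finset.Icc 1 (L - 1) := by
    simp only [Finset.mem_Icc]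
    omega
  -- measurability of the linear maps
  have hφm : ∀ k : ℕ, Measurable (fun z : ℕ → ℝ =>
      ∑ l ∈ Finset.Icc 1 L, ccoef ρ σ N L k l * z l) :=
    fun k => Finset.measurable_sum _ (fun l _ => (measurable_pi_apply l).const_mul _)
  -- rewrite the estimator as a sum of independent contributions
  have hY : (fun ω => sampleMean (N L) (fun j ω' => Z j ω' L) ω
        + ∑ l ∈ Finset.Icc 1 (L - 1),
            (ρ l * σ L / σ l) * (sampleMean (N l) (fun j ω' => Z j ω' l) ω
              - sampleMean (N (l + 1)) (fun j ω' => Z j ω' l) ω))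
      = ∑ j ∈ Finset.range (N 1), wfun Z ρ σ N L j := by
    funext ω
    rw [Finset.sum_apply]
    have step1 : ∀ j ∈ Finset.range (N 1), wfun Z ρ σ N L j ω
        = ∑ l ∈ Finset.Icc 1 L, ccoef ρ σ N L j l * Z j ω l := fun j _ => rfl
    rw [Finset.sum_congr rfl step1, Finset.sum_comm]
    have inner : ∀ l ∈ Finset.Icc 1 L,
        ∑ j ∈ Finset.range (N 1), ccoef ρ σ N L j l * Z j ω l
        = (ρ l * σ L / σ l) * (sampleMean (N l) (fun j ω' => Z j ω' l) ω
            - sampleMean (if l + 1 ≤ L then N (l + 1) else 0) (fun j ω' => Z j ω' l) ω) := by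
      intro l hl
      obtain ⟨h1, h2⟩ := Finset.mem_Icc.1 hl
      have hle2 : (if l + 1 ≤ L then N (l + 1) else 0) ≤ N 1 := by
        by_cases h : l + 1 ≤ L
        · rw [if_pos h]; exact hNM (l + 1) (by omega) h
        · rw [if_neg h]; exact Nat.zero_le _
      rw [sampleMean_eq_sum (M := N 1) (hNM l h1 h2), sampleMean_eq_sum (M := N 1) hle2,
        ← Finset.sum_sub_distrib, Finset.mul_sum]
      refine Finset.sum_congr rfl fun j _ => ?_
      simp only [ccoef, if_pos h2]
      ring
    rw [Finset.sum_congr rfl inner, hins, Finset.sum_insert hnot]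
    have htop : (ρ L * σ L / σ L) * (sampleMean (N L) (fun j ω' => Z j ω' L) ω
        - sampleMean (if L + 1 ≤ L then N (L + 1) else 0) (fun j ω' => Z j ω' L) ω)
        = sampleMean (N L) (fun j ω' => Z j ω' L) ω := by
      rw [if_neg (by omega), hρL, one_mul, div_self hσLne]
      simp [sampleMean]
    rw [htop]
    have hrest : ∀ l ∈ Finset.Icc 1 (L - 1),
        (ρ l * σ L / σ l) * (sampleMean (N l) (fun j ω' => Z j ω' l) ω
            - sampleMean (if l + 1 ≤ L then N (l + 1) else 0) (fun j ω' => Z j ω' l) ω)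
        = (ρ l * σ L / σ l) * (sampleMean (N l) (fun j ω' => Z j ω' l) ω
            - sampleMean (N (l + 1)) (fun j ω' => Z j ω' l) ω) := by
      intro l hl
      obtain ⟨h1, h2⟩ := Finset.mem_Icc.1 hl
      rw [if_pos (by omega)]
    rw [Finset.sum_congr rfl hrest]
  rw [hY]
  -- variance of the sum of independent contributions
  have hW2 : ∀ j ∈ Finset.range (N 1), MemLp (wfun Z ρ σ N L j) 2 μ :=
    fun j _ => memLp_finset_sum _ (fun l hl => (hL2 j l hl).const_mul _)
  have hWpair : (↑(Finset.range (N 1)) : Set ℕ).Pairwise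
      fun i j => IndepFun (wfun Z ρ σ N L i) (wfun Z ρ σ N L j) μ := by
    intro i _ j _ hij
    exact (hindep.indepFun hij).comp (hφm i) (hφm j)
  rw [IndepFun.variance_sum hW2 hWpair]
  have hvarW : ∀ j ∈ Finset.range (N 1), variance (wfun Z ρ σ N L j) μ
      = ∑ l ∈ Finset.Icc 1 L, ∑ l' ∈ Finset.Icc 1 L,
          ccoef ρ σ N L j l * ccoef ρ σ N L j l'
            * covar μ (fun ω => Z 0 ω l) (fun ω => Z 0 ω l') := by
    intro j _
    have hid : IdentDistrib (wfun Z ρ σ N L j)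
        (fun ω => ∑ l ∈ Finset.Icc 1 L, ccoef ρ σ N L j l * Z 0 ω l) μ μ :=
      (hident j).comp (hφm j)
    rw [hid.variance_eq]
    exact variance_linear_comb μ _ _ _ (fun l hl => hL2 0 l hl)
  rw [Finset.sum_congr rfl hvarW]
  have hswap : ∑ j ∈ Finset.range (N 1), ∑ l ∈ Finset.Icc 1 L, ∑ l' ∈ Finset.Icc 1 L,
        ccoef ρ σ N L j l * ccoef ρ σ N L j l'
          * covar μ (fun ω => Z 0 ω l) (fun ω => Z 0 ω l')
      = ∑ l ∈ Finset.Icc 1 L, ∑ l' ∈ Finset.Icc 1 L,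
          gsum ρ σ N L (N 1) l l' * covar μ (fun ω => Z 0 ω l) (fun ω => Z 0 ω l') := by
    rw [Finset.sum_comm]
    refine Finset.sum_congr rfl fun l _ => ?_
    rw [Finset.sum_comm]
    refine Finset.sum_congr rfl fun l' _ => ?_
    exact (Finset.sum_mul _ _ _).symm
  rw [hswap]
  -- values of `gsum`
  have hGsymm : ∀ l l', gsum ρ σ N L (N 1) l l' = gsum ρ σ N L (N 1) l' l := by
    intro l l'
    unfold gsum
    exact Finset.sum_congr rfl fun j _ => mul_comm _ _
  have hGLL : gsum ρ σ N L (N 1) L L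
      = (ρ L * σ L / σ L) * (ρ L * σ L / σ L) * ((N L : ℝ))⁻¹ := by
    rw [gsum_eval, if_pos (le_refl L), if_neg (by omega)]
    rw [sum_dsub, sum_dcoef_mul hNLpos le_rfl (hNM L hL le_rfl),
      sum_dcoef_zero_right, Finset.sum_congr rfl
        (fun j (_ : j ∈ Finset.range (N 1)) => by rw [dcoef_zero, zero_mul]),
      Finset.sum_const, smul_zero, sum_dcoef_zero_right]
    ring
  have hdiag : ∀ l, 1 ≤ l → l + 1 ≤ L → gsum ρ σ N L (N 1) l l
      = (ρ l * σ L / σ l) * (ρ l * σ L / σ l)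
        * (((N (l + 1) : ℝ))⁻¹ - ((N l : ℝ))⁻¹) := by
    intro l h1 h2
    have hl2 : l ≤ L := by omega
    rw [gsum_eval, if_pos hl2, if_pos h2, sum_dsub,
      sum_dcoef_mul (hN1 l h1 hl2) le_rfl (hNM l h1 hl2),
      sum_dcoef_mul' (hN1 (l + 1) (by omega) h2) (hmono l (l + 1) h1 (by omega) h2)
        (hNM l h1 hl2),
      sum_dcoef_mul (hN1 (l + 1) (by omega) h2) (hmono l (l + 1) h1 (by omega) h2)
        (hNM l h1 hl2),
      sum_dcoef_mul (hN1 (l + 1) (by omega) h2) le_rfl (hNM (l + 1) (by omega) h2)]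
    ring
  have hcross0 : ∀ l l', 1 ≤ l → l + 1 ≤ l' → l' + 1 ≤ L →
      gsum ρ σ N L (N 1) l l' = 0 := by
    intro l l' h1 h2 h3
    have hl2 : l ≤ L := by omega
    have hl'1 : 1 ≤ l' := by omega
    have hl'2 : l' ≤ L := by omega
    rw [gsum_eval, if_pos hl2, if_pos (by omega : l + 1 ≤ L), if_pos hl'2,
      if_pos h3, sum_dsub,
      sum_dcoef_mul' (hN1 l' hl'1 hl'2) (hmono l l' h1 (by omega) hl'2) (hNM l h1 hl2),
      sum_dcoef_mul' (hN1 (l' + 1) (by omega) h3)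
        (hmono l (l' + 1) h1 (by omega) h3) (hNM l h1 hl2),
      sum_dcoef_mul' (hN1 l' hl'1 hl'2) (hmono (l + 1) l' (by omega) h2 hl'2)
        (hNM (l + 1) (by omega) (by omega)),
      sum_dcoef_mul' (hN1 (l' + 1) (by omega) h3)
        (hmono (l + 1) (l' + 1) (by omega) (by omega) h3) (hNM (l + 1) (by omega) (by omega))]
    ring
  have hcrossL : ∀ l, 1 ≤ l → l + 1 ≤ L → gsum ρ σ N L (N 1) l L
      = (ρ l * σ L / σ l) * (ρ L * σ L / σ L)
        * (((N l : ℝ))⁻¹ - ((N (l + 1) : ℝ))⁻¹) := by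
    intro l h1 h2
    have hl2 : l ≤ L := by omega
    rw [gsum_eval, if_pos hl2, if_pos h2, if_pos (le_refl L), if_neg (by omega),
      sum_dsub,
      sum_dcoef_mul' hNLpos (hmono l L h1 hl2 le_rfl) (hNM l h1 hl2),
      sum_dcoef_zero_right,
      sum_dcoef_mul' hNLpos (hmono (l + 1) L (by omega) h2 le_rfl)
        (hNM (l + 1) (by omega) h2),
      sum_dcoef_zero_right]
    ring
  -- assemble the double sum
  rw [hins, Finset.sum_insert hnot, Finset.sum_insert hnot]
  have hrow : ∀ l ∈ Finset.Icc 1 (L - 1),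
      ∑ l' ∈ insert L (Finset.Icc 1 (L - 1)),
          gsum ρ σ N L (N 1) l l' * covar μ (fun ω => Z 0 ω l) (fun ω => Z 0 ω l')
      = gsum ρ σ N L (N 1) l L * covar μ (fun ω => Z 0 ω l) (fun ω => Z 0 ω L)
        + gsum ρ σ N L (N 1) l l * covar μ (fun ω => Z 0 ω l) (fun ω => Z 0 ω l) := by
    intro l hl
    obtain ⟨h1, h2⟩ := Finset.mem_Icc.1 hl
    rw [Finset.sum_insert hnot]
    congr 1
    refine Finset.sum_eq_single_of_mem l hl fun b hb hbl => ?_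
    obtain ⟨hb1, hb2⟩ := Finset.mem_Icc.1 hb
    rcases lt_or_gt_of_ne hbl with h | h
    · rw [hGsymm, hcross0 b l hb1 (by omega) (by omega), zero_mul]
    · rw [hcross0 l b h1 (by omega) (by omega), zero_mul]
  rw [Finset.sum_congr rfl hrow]
  -- compute the remaining explicit sums
  have hterm1 : gsum ρ σ N L (N 1) L L
      * covar μ (fun ω => Z 0 ω L) (fun ω => Z 0 ω L)
      = σ L ^ 2 * ((N L : ℝ))⁻¹ := by
    rw [hGLL, hcovself L hL le_rfl, hρL]
    field_simp
  have hrowL : ∀ l ∈ Finset.Icc 1 (L - 1),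
      gsum ρ σ N L (N 1) L l * covar μ (fun ω => Z 0 ω L) (fun ω => Z 0 ω l)
        + (gsum ρ σ N L (N 1) l L * covar μ (fun ω => Z 0 ω l) (fun ω => Z 0 ω L)
          + gsum ρ σ N L (N 1) l l * covar μ (fun ω => Z 0 ω l) (fun ω => Z 0 ω l))
      = (ρ l) ^ 2 * σ L ^ 2 * (((N l : ℝ))⁻¹ - ((N (l + 1) : ℝ))⁻¹) := by
    intro l hl
    obtain ⟨h1, h2⟩ := Finset.mem_Icc.1 hl
    have hl2 : l ≤ L := by omega
    have hlp1 : l + 1 ≤ L := by omega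
    rw [hGsymm L l, hcrossL l h1 hlp1, hdiag l h1 hlp1,
      covar_comm' μ (fun ω => Z 0 ω L) (fun ω => Z 0 ω l),
      hcovL l h1 hl2, hcovself l h1 hl2, hρL]
    have hσl : σ l ≠ 0 := hσne l h1 hl2
    field_simp
    ring
  have hL1 : L - 1 + 1 = L := by omega
  have habel : ∑ l ∈ Finset.Icc 1 L, ((ρ l) ^ 2 - (ρ (l - 1)) ^ 2) / (N l : ℝ)
      = (ρ L) ^ 2 * ((N L : ℝ))⁻¹
        + ∑ l ∈ Finset.Icc 1 (L - 1), (ρ l) ^ 2 * (((N l : ℝ))⁻¹ - ((N (l + 1) : ℝ))⁻¹) := by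
    have h := abel_sum (L - 1) (fun k => ((N k : ℝ))⁻¹) (fun k => (ρ k) ^ 2) (by simp [hρ0])
    rw [hL1] at h
    calc ∑ l ∈ Finset.Icc 1 L, ((ρ l) ^ 2 - (ρ (l - 1)) ^ 2) / (N l : ℝ)
        = ∑ l ∈ Finset.Icc 1 L, ((ρ l) ^ 2 - (ρ (l - 1)) ^ 2) * ((N l : ℝ))⁻¹ :=
          Finset.sum_congr rfl fun l _ => div_eq_mul_inv _ _
      _ = (ρ L) ^ 2 * ((N L : ℝ))⁻¹
          + ∑ l ∈ Finset.Icc 1 (L - 1), (ρ l) ^ 2 * (((N l : ℝ))⁻¹ - ((N (l + 1) : ℝ))⁻¹) := h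
  rw [hterm1, add_assoc, ← Finset.sum_add_distrib, Finset.sum_congr rfl hrowL, ← hins,
    habel, hρL, one_pow, mul_add, Finset.mul_sum]
  exact congrArg₂ (· + ·) (by ring) (Finset.sum_congr rfl fun l _ => by ring)
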